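/- Let m, n ≥ 1, let A, Â ∈ ℝ^{m×n}, and let I = {I_1,…,I_s} be a partition of {1,…,m} and J = {J_1,…,J_t} a partition of {1,…,n} such that: (i) for every p, q and every i ∈ I_p, ∑_{j∈J_q} A_{ij} = ∑_{j∈J_q} Â_{ij}, and this common value is the same for all i ∈ I_p; (ii) for every p, q and every j ∈ J_q, ∑_{i∈I_p} A_{ij} = ∑_{i∈I_p} Â_{ij}, and this common value is the same for all j ∈ J_q. Then for every x ∈ ℝ^n, every p ∈ {1,…,s}, and every i ∈ I_p, the J-average x̂ of x satisfies (Âx̂)_i = (1/|I_p|) ∑_{i'∈I_p} (Ax)_{i'}. -/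

import Mathlib

open Matrix

/-- The `J`-average of a vector `x`, where the partition of `{1,…,n}` is encoded by a
surjective map `π : Fin n → Fin t` (the class `J_q` is the fiber `π ⁻¹ {q}`). -/
noncomputable def Javg {n t : ℕ} (π : Fin n → Fin t) (x : Fin n → ℝ) : Fin n → ℝ :=
  fun j => (∑ j' ∈ Finset.univ.filter (fun j' => π j' = π j), x j') /
    ((Finset.univ.filter (fun j' => π j' = π j)).card : ℝ)

/-- If `A, Â` are related by partitions `I` (of rows, encoded by `σ`) and `J` (of columns,
encoded by `π`) as in conditions (i)–(ii), then for every `x`, every class `I_p` and every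
`i ∈ I_p`, the `J`-average `x̂` of `x` satisfies `(Âx̂)_i = (1/|I_p|) ∑_{i'∈I_p} (Ax)_{i'}`. -/
theorem javg_mulVec_eq_row_average {m n s t : ℕ} (hm : 1 ≤ m) (hn : 1 ≤ n)
    (σ : Fin m → Fin s) (hσ : Function.Surjective σ)
    (π : Fin n → Fin t) (hπ : Function.Surjective π)
    (A Ahat : Matrix (Fin m) (Fin n) ℝ)
    -- (i)
    (hArow : ∀ (q : Fin t) (i : Fin m),
      ∑ j ∈ Finset.univ.filter (fun j => π j = q), A i j =
      ∑ j ∈ Finset.univ.filter (fun j => π j = q), Ahat i j)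
    (hArowConst : ∀ (q : Fin t) (i i₂ : Fin m), σ i = σ i₂ →
      ∑ j ∈ Finset.univ.filter (fun j => π j = q), A i j =
      ∑ j ∈ Finset.univ.filter (fun j => π j = q), A i₂ j)
    -- (ii)
    (hAcol : ∀ (p : Fin s) (j : Fin n),
      ∑ i ∈ Finset.univ.filter (fun i => σ i = p), A i j =
      ∑ i ∈ Finset.univ.filter (fun i => σ i = p), Ahat i j)
    (hAcolConst : ∀ (p : Fin s) (j j₂ : Fin n), π j = π j₂ →
      ∑ i ∈ Finset.univ.filter (fun i => σ i = p), A i j =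
      ∑ i ∈ Finset.univ.filter (fun i => σ i = p), A i j₂) :
    ∀ (x : Fin n → ℝ) (p : Fin s) (i : Fin m), σ i = p →
      Ahat.mulVec (Javg π x) i =
        (∑ i' ∈ Finset.univ.filter (fun i' => σ i' = p), A.mulVec x i') /
          ((Finset.univ.filter (fun i' => σ i' = p)).card : ℝ) := by
  classical
  intro x p i hip
  subst hip
  set Ip : Finset (Fin m) := Finset.univ.filter (fun i' => σ i' = σ i) with hIp
  set Jset : Fin t → Finset (Fin n) :=
    fun q => Finset.univ.filter (fun j => π j = q) with hJset
  have hiIp : i ∈ Ip := by simp [hIp]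
  have hIcard : ((Ip.card : ℝ)) ≠ 0 := by
    exact_mod_cast (Finset.card_pos.mpr ⟨i, hiIp⟩).ne'
  have hJne : ∀ q : Fin t, (Jset q).Nonempty := by
    intro q; obtain ⟨j, hj⟩ := hπ q; exact ⟨j, by simp [hJset, hj]⟩
  have hJcard : ∀ q : Fin t, (((Jset q).card : ℝ)) ≠ 0 := by
    intro q; exact_mod_cast (Finset.card_pos.mpr (hJne q)).ne'
  set S : Fin t → ℝ := fun q => ∑ j ∈ Jset q, x j with hS
  set R : Fin t → ℝ := fun q => ∑ j ∈ Jset q, A i j with hR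
  -- LHS
  have hLHS : Ahat.mulVec (Javg π x) i =
      ∑ q : Fin t, (S q / ((Jset q).card : ℝ)) * R q := by
    have h1 : Ahat.mulVec (Javg π x) i
        = ∑ j : Fin n, Ahat i j * (S (π j) / ((Jset (π j)).card : ℝ)) := by
      simp only [Matrix.mulVec, dotProduct, Javg, hS, hJset]
    rw [h1, ← Finset.sum_fiberwise (Finset.univ) π
      (fun j => Ahat i j * (S (π j) / ((Jset (π j)).card : ℝ)))]
    refine Finset.sum_congr rfl (fun q _ => ?_)
    have h2 : ∑ j ∈ Jset q, Ahat i j * (S (π j) / ((Jset (π j)).card : ℝ))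
        = (S q / ((Jset q).card : ℝ)) * ∑ j ∈ Jset q, Ahat i j := by
      rw [Finset.mul_sum]
      refine Finset.sum_congr rfl (fun j hj => ?_)
      have : π j = q := by simpa [hJset] using hj
      rw [this]; ring
    simpa [hJset] using h2.trans (by rw [← hArow q i])
  -- RHS
  have hRHS : (∑ i' ∈ Ip, A.mulVec x i') / ((Ip.card : ℝ))
      = (∑ q : Fin t, ∑ j ∈ Jset q, (∑ i' ∈ Ip, A i' j) * x j) / ((Ip.card : ℝ)) := by
    congr 1
    have h1 : ∑ i' ∈ Ip, A.mulVec x i' = ∑ j : Fin n, (∑ i' ∈ Ip, A i' j) * x j := by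
      simp only [Matrix.mulVec, dotProduct]
      refine Finset.sum_comm.trans ?_
      simp [Finset.sum_mul]
    rw [h1, ← Finset.sum_fiberwise (Finset.univ) π
      (fun j => (∑ i' ∈ Ip, A i' j) * x j)]
  rw [hLHS]
  show _ = (∑ i' ∈ Ip, A.mulVec x i') / ((Ip.card : ℝ))
  rw [hRHS, Finset.sum_div, ← hLHS]
  rw [hLHS]
  refine Finset.sum_congr rfl (fun q _ => ?_)
  -- pick a representative j₀ of the fiber q
  obtain ⟨j₀, hj₀⟩ := hJne q
  have hπj₀ : π j₀ = q := by simpa [hJset] using hj₀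
  -- column sums are constant on the fiber
  have hcolconst : ∀ j ∈ Jset q, (∑ i' ∈ Ip, A i' j) = ∑ i' ∈ Ip, A i' j₀ := by
    intro j hj
    have hπj : π j = q := by simpa [hJset] using hj
    exact hAcolConst (σ i) j j₀ (by rw [hπj, hπj₀])
  have hsum : ∑ j ∈ Jset q, (∑ i' ∈ Ip, A i' j) * x j
      = (∑ i' ∈ Ip, A i' j₀) * S q := by
    rw [hS, Finset.mul_sum]
    exact Finset.sum_congr rfl (fun j hj => by rw [hcolconst j hj])
  -- double counting: |Ip| * R q = |Jq| * colsum j₀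
  have hdc : (Ip.card : ℝ) * R q = ((Jset q).card : ℝ) * (∑ i' ∈ Ip, A i' j₀) := by
    have h1 : ∑ i' ∈ Ip, ∑ j ∈ Jset q, A i' j = (Ip.card : ℝ) * R q := by
      rw [Finset.sum_congr rfl (fun i' hi' => hArowConst q i' i
        (by simpa [hIp] using hi'))]
      simp [hR, hJset, Finset.sum_const, nsmul_eq_mul]
    have h2 : ∑ i' ∈ Ip, ∑ j ∈ Jset q, A i' j
        = ((Jset q).card : ℝ) * (∑ i' ∈ Ip, A i' j₀) := by
      refine Finset.sum_comm.trans ?_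
      rw [Finset.sum_congr rfl hcolconst]
      simp [Finset.sum_const, nsmul_eq_mul]
    rw [← h1, h2]
  rw [hsum]
  field_simp
  linear_combination S q * hdc
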